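/- Let x be a positive irrational real number, let p be a prime with p < x, assume x < N_p, and set m = ⌊x/p⌋ + 2. Then Σ_{k=1}^{p-1} ( |S_x(kN_p − x, kN_p)| − |S_x(0, x)| ) = − Σ_{n=1}^{m} Σ_{i=1}^{p-1} M_p'(x/(np), x/(np−i)). -/

import Mathlib

open scoped Classical
open Finset

noncomputable section

/-- Sum of the Möbius function over positive integers `a` in the open interval `(u, v)`
that are *not* divisible by `p`. -/
def Mp' (p : ℕ) (u v : ℝ) : ℤ :=
  ∑ a ∈ (Finset.Icc 1 ⌈v⌉₊).filter
      (fun a : ℕ => u < (a : ℝ) ∧ (a : ℝ) < v ∧ ¬ p ∣ a),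
    ArithmeticFunction.moebius a

/-- Sum of the Möbius function over positive integers `a` in the open interval `(u, v)`
that *are* divisible by `p`. -/
def Mp (p : ℕ) (u v : ℝ) : ℤ :=
  ∑ a ∈ (Finset.Icc 1 ⌈v⌉₊).filter
      (fun a : ℕ => u < (a : ℝ) ∧ (a : ℝ) < v ∧ p ∣ a),
    ArithmeticFunction.moebius a

/-- `Sx y u v` : the set of positive integers in the open interval `(u, v)` all of whose
prime divisors exceed `y`. -/
def Sx (y u v : ℝ) : Set ℕ :=
  {a : ℕ | 0 < a ∧ u < (a : ℝ) ∧ (a : ℝ) < v ∧ ∀ q : ℕ, q.Prime → q ∣ a → y < (q : ℝ)}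

/-- `Np x p` : the product of all primes `q < x` with `q ≠ p`. -/
def Np (x : ℝ) (p : ℕ) : ℕ :=
  ∏ q ∈ (Finset.range ⌈x⌉₊).filter (fun q : ℕ => q.Prime ∧ (q : ℝ) < x ∧ q ≠ p), q

/-- `Aset x j` : squarefree positive integers with exactly `j` prime factors,
all of them less than `x`. -/
def Aset (x : ℝ) (j : ℕ) : Finset ℕ :=
  (Finset.Icc 1 (⌈x⌉₊ ^ j)).filter
    (fun a => Squarefree a ∧ a.primeFactors.card = j ∧ ∀ q ∈ a.primeFactors, (q : ℝ) < x)

/-- `Nint a b` : the number of integers in the open interval `(a, b)`. -/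
def Nint (a b : ℝ) : ℕ :=
  (Finset.Ioo ⌊a⌋ ⌈b⌉).card

/-- `Rres a b = (b - a) - N(a, b)`. -/
def Rres (a b : ℝ) : ℝ :=
  (b - a) - Nint a b

/-- `piR t` : the number of primes `≤ t`. -/
def piR (t : ℝ) : ℕ :=
  Nat.primeCounting ⌊t⌋₊

namespace StmtAux

lemma ceil_of_ne_int {s : ℝ} (hs : ∀ z : ℤ, s ≠ z) : ⌈s⌉ = ⌊s⌋ + 1 := by
  refine le_antisymm (Int.ceil_le.2 ?_) ?_
  · push_cast
    exact (Int.lt_floor_add_one s).le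
  · have h1 : (⌊s⌋ : ℝ) < s := lt_of_le_of_ne (Int.floor_le s) (fun h => hs ⌊s⌋ h.symm)
    have : (⌊s⌋ : ℝ) < ⌈s⌉ := h1.trans_le (Int.le_ceil s)
    exact_mod_cast Int.lt_iff_add_one_le.1 (by exact_mod_cast this)

lemma mem_Ioo_floor_ceil {a b : ℝ} {m : ℤ} :
    m ∈ Finset.Ioo ⌊a⌋ ⌈b⌉ ↔ a < m ∧ (m : ℝ) < b := by
  rw [Finset.mem_Ioo, Int.floor_lt, Int.lt_ceil]

lemma Nint_zero {s : ℝ} (hs : Irrational s) : (Nint 0 s : ℤ) = max 0 ⌊s⌋ := by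
  rw [Nint, Int.card_Ioo, ceil_of_ne_int (fun z => hs.ne_int z)]
  simp [Int.toNat_eq_max, max_comm]

lemma Nint_int_sub (w : ℤ) {s : ℝ} (hs : Irrational s) :
    Nint ((w : ℝ) - s) w = Nint 0 s := by
  rw [Nint, Nint, Int.card_Ioo, Int.card_Ioo]
  have h1 : ⌊(w : ℝ) - s⌋ = ⌊-s⌋ + w := by
    rw [sub_eq_neg_add]; exact Int.floor_add_intCast (-s) w
  rw [h1, Int.ceil_intCast, Int.floor_neg, ceil_of_ne_int (fun z => hs.ne_int z)]
  ring_nf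

lemma floor_sub_of_fract_lt {t s : ℝ} (h : Int.fract t < Int.fract s) :
    ⌊t - s⌋ = ⌊t⌋ - ⌊s⌋ - 1 := by
  have ht := Int.floor_add_fract t
  have hs := Int.floor_add_fract s
  rw [Int.floor_eq_iff]
  constructor
  · push_cast
    nlinarith [Int.fract_lt_one s, Int.fract_nonneg t]
  · push_cast
    nlinarith [Int.fract_nonneg s]

lemma floor_sub_of_fract_gt {t s : ℝ} (h : Int.fract s < Int.fract t) :
    ⌊t - s⌋ = ⌊t⌋ - ⌊s⌋ := by
  have ht := Int.floor_add_fract t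
  have hs := Int.floor_add_fract s
  rw [Int.floor_eq_iff]
  constructor
  · push_cast
    nlinarith [Int.fract_nonneg s, Int.fract_nonneg t]
  · push_cast
    nlinarith [Int.fract_lt_one t, Int.fract_nonneg s]


lemma Nint_diff {t s : ℝ} (ht : ∀ z : ℤ, t ≠ z) (hs : Irrational s) (h0 : 0 < s)
    (hst : Int.fract t ≠ Int.fract s) :
    (Nint (t - s) t : ℤ) - (Nint 0 s : ℤ) = if Int.fract t < Int.fract s then 1 else 0 := by
  have hfl : (0:ℤ) ≤ ⌊s⌋ := Int.floor_nonneg.2 h0.le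
  have h2 : ⌊t - s⌋ ≤ ⌊t⌋ := Int.floor_le_floor (by linarith)
  rw [Nint, Int.card_Ioo, ceil_of_ne_int ht, Nint_zero hs, max_eq_right hfl]
  rcases lt_or_gt_of_ne hst with h | h
  · rw [floor_sub_of_fract_lt h, if_pos h]
    have : (⌊t⌋ + 1 - (⌊t⌋ - ⌊s⌋ - 1) - 1 : ℤ) = ⌊s⌋ + 1 := by ring
    rw [this, Int.toNat_of_nonneg (by linarith)]
    ring
  · rw [floor_sub_of_fract_gt h, if_neg (not_lt.2 h.le)]
    have : (⌊t⌋ + 1 - (⌊t⌋ - ⌊s⌋) - 1 : ℤ) = ⌊s⌋ := by ring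
    rw [this, Int.toNat_of_nonneg hfl]
    ring


lemma legendre (x : ℝ) (hxirr : Irrational x) (P : ℕ) (hP : 0 < P)
    (hPval : ∀ q : ℕ, q.Prime → (q ∣ P ↔ (q : ℝ) < x))
    (u v : ℝ) (hu : 0 ≤ u) :
    ((Sx x u v).ncard : ℤ)
      = ∑ d ∈ P.divisors, ArithmeticFunction.moebius d * (Nint (u / d) (v / d) : ℤ) := by
  classical
  set T : Finset ℕ := (Finset.Ioo 0 ⌈v⌉₊).filter (fun n => u < (n : ℝ) ∧ (n : ℝ) < v) with hT
  have hTmem : ∀ n : ℕ, n ∈ T ↔ (0 < n ∧ u < (n : ℝ) ∧ (n : ℝ) < v) := by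
    intro n
    rw [hT, Finset.mem_filter, Finset.mem_Ioo]
    constructor
    · rintro ⟨⟨h0, _⟩, h1, h2⟩
      exact ⟨h0, h1, h2⟩
    · rintro ⟨h0, h1, h2⟩
      exact ⟨⟨h0, Nat.lt_ceil.2 h2⟩, h1, h2⟩
  -- identify Sx with a filtered finset
  have hS : Sx x u v = ↑(T.filter (fun n => Nat.Coprime n P)) := by
    ext n
    simp only [Sx, Set.mem_setOf_eq, Finset.mem_coe, Finset.mem_filter, hTmem]
    constructor
    · rintro ⟨h0, h1, h2, h3⟩
      refine ⟨⟨h0, h1, h2⟩, ?_⟩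
      by_contra hc
      obtain ⟨q, hq, hqd⟩ := Nat.exists_prime_and_dvd hc
      have hqn : q ∣ n := hqd.trans (Nat.gcd_dvd_left _ _)
      have hqP : q ∣ P := hqd.trans (Nat.gcd_dvd_right _ _)
      have := h3 q hq hqn
      have := (hPval q hq).1 hqP
      linarith
    · rintro ⟨⟨h0, h1, h2⟩, hc⟩
      refine ⟨h0, h1, h2, fun q hq hqn => ?_⟩
      by_contra hlt
      have hqx : (q : ℝ) < x := by
        rcases lt_or_eq_of_le (not_lt.1 hlt) with h | h
        · exact h
        · exact absurd h.symm (hxirr.ne_int q)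
      have hqP : q ∣ P := (hPval q hq).2 hqx
      have hd : q ∣ Nat.gcd n P := Nat.dvd_gcd hqn hqP
      rw [hc] at hd
      exact hq.one_lt.ne' (Nat.dvd_one.1 hd)
  rw [hS, Set.ncard_coe_finset]
  -- card as a sum of indicators, then Möbius expansion
  have step1 : (((T.filter (fun n => Nat.Coprime n P)).card : ℤ))
      = ∑ n ∈ T, (if Nat.Coprime n P then (1 : ℤ) else 0) := by
    rw [Finset.card_filter]
    push_cast
    rfl
  have step2 : ∀ n ∈ T, (if Nat.Coprime n P then (1 : ℤ) else 0)
      = ∑ d ∈ P.divisors.filter (· ∣ n), ArithmeticFunction.moebius d := by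
    intro n hn
    have hn0 : 0 < n := ((hTmem n).1 hn).1
    have hg0 : Nat.gcd n P ≠ 0 := fun h => hn0.ne' (Nat.eq_zero_of_gcd_eq_zero_left h)
    have key := congrFun (congrArg (fun f => f.toFun) ArithmeticFunction.moebius_mul_coe_zeta)
      (Nat.gcd n P)
    have key2 : ∑ d ∈ (Nat.gcd n P).divisors, ArithmeticFunction.moebius d
        = if Nat.gcd n P = 1 then (1 : ℤ) else 0 := by
      have h1 := ArithmeticFunction.coe_mul_zeta_apply
        (f := ArithmeticFunction.moebius) (x := Nat.gcd n P)
      rw [← h1]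
      show ((ArithmeticFunction.moebius * ArithmeticFunction.zeta)) (Nat.gcd n P) = _
      rw [ArithmeticFunction.moebius_mul_coe_zeta]
      exact ArithmeticFunction.one_apply
    have hdiv : (Nat.gcd n P).divisors = P.divisors.filter (· ∣ n) := by
      ext d
      simp only [Nat.mem_divisors, Finset.mem_filter, Nat.dvd_gcd_iff]
      constructor
      · rintro ⟨⟨h1, h2⟩, _⟩
        exact ⟨⟨h2, hP.ne'⟩, h1⟩
      · rintro ⟨⟨h2, _⟩, h1⟩
        exact ⟨⟨h1, h2⟩, hg0⟩
    rw [← hdiv, key2]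
  rw [step1, Finset.sum_congr rfl step2]
  -- swap the sums
  have step3 : ∑ n ∈ T, ∑ d ∈ P.divisors.filter (· ∣ n), ArithmeticFunction.moebius d
      = ∑ d ∈ P.divisors, ArithmeticFunction.moebius d * ((T.filter (fun n => d ∣ n)).card : ℤ) := by
    have : ∀ n ∈ T, ∑ d ∈ P.divisors.filter (· ∣ n), ArithmeticFunction.moebius d
        = ∑ d ∈ P.divisors, if d ∣ n then ArithmeticFunction.moebius d else 0 := by
      intro n _
      exact Finset.sum_filter _ _
    rw [Finset.sum_congr rfl this, Finset.sum_comm]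
    refine Finset.sum_congr rfl fun d _ => ?_
    rw [← Finset.sum_filter, Finset.sum_const, nsmul_eq_mul, mul_comm]
  rw [step3]
  -- identify the inner count
  refine Finset.sum_congr rfl fun d hd => ?_
  congr 1
  have hd0 : 0 < d := Nat.pos_of_mem_divisors hd
  have hdR : (0 : ℝ) < d := by exact_mod_cast hd0
  congr 1
  refine Finset.card_bij' (fun n _ => ((n / d : ℕ) : ℤ)) (fun m _ => d * m.toNat) ?_ ?_ ?_ ?_
  · intro n hn
    obtain ⟨hnT, c, rfl⟩ := Finset.mem_filter.1 hn
    obtain ⟨hn0, hn2, hn3⟩ := (hTmem _).1 hnT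
    show ((d * c / d : ℕ) : ℤ) ∈ Finset.Ioo ⌊u / (d:ℝ)⌋ ⌈v / (d:ℝ)⌉
    rw [Nat.mul_div_cancel_left c hd0, mem_Ioo_floor_ceil]
    push_cast at hn2 hn3 ⊢
    constructor
    · rw [div_lt_iff₀ hdR]; linarith
    · rw [lt_div_iff₀ hdR]; linarith
  · intro m hm
    rw [mem_Ioo_floor_ceil] at hm
    obtain ⟨hm1, hm2⟩ := hm
    have hm0 : (0 : ℤ) < m := by
      have : (0:ℝ) < m := lt_of_le_of_lt (div_nonneg hu hdR.le) hm1
      exact_mod_cast this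
    have hcast : ((d * m.toNat : ℕ) : ℝ) = d * (m : ℝ) := by
      have h1 : ((m.toNat : ℕ) : ℝ) = (m : ℝ) := by
        exact_mod_cast congrArg (Int.cast : ℤ → ℝ) (Int.toNat_of_nonneg hm0.le)
      push_cast
      rw [h1]
    rw [div_lt_iff₀ hdR] at hm1
    rw [lt_div_iff₀ hdR] at hm2
    refine Finset.mem_filter.2 ⟨(hTmem _).2 ⟨?_, ?_, ?_⟩, Dvd.intro _ rfl⟩
    · have : 0 < m.toNat := by omega
      positivity
    · rw [hcast]; linarith
    · rw [hcast]; linarith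
  · intro n hn
    have hdn : d ∣ n := (Finset.mem_filter.1 hn).2
    show d * (((n / d : ℕ) : ℤ)).toNat = n
    rw [Int.toNat_natCast]
    exact Nat.mul_div_cancel' hdn
  · intro m hm
    rw [mem_Ioo_floor_ceil] at hm
    have hm0 : (0 : ℤ) ≤ m := by
      have : (0:ℝ) < m := lt_of_le_of_lt (div_nonneg hu hdR.le) hm.1
      exact_mod_cast this.le
    show ((d * m.toNat / d : ℕ) : ℤ) = m
    rw [Nat.mul_div_cancel_left _ hd0, Int.toNat_of_nonneg hm0]

lemma squarefree_prod_primes {s : Finset ℕ} (h : ∀ q ∈ s, q.Prime) :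
    Squarefree (∏ q ∈ s, q) := by
  classical
  induction s using Finset.induction_on with
  | empty => simpa using squarefree_one
  | @insert a s ha ih =>
    rw [Finset.prod_insert ha]
    have hap : a.Prime := h a (Finset.mem_insert_self a s)
    have hcop : Nat.Coprime a (∏ q ∈ s, q) := by
      refine Nat.Coprime.prod_right fun r hr => ?_
      have hrp : r.Prime := h r (Finset.mem_insert_of_mem hr)
      rw [hap.coprime_iff_not_dvd]
      intro hdvd
      exact ha (((Nat.prime_dvd_prime_iff_eq hap hrp).1 hdvd) ▸ hr)
    exact (Nat.squarefree_mul hcop).2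
      ⟨hap.squarefree, ih fun q hq => h q (Finset.mem_insert_of_mem hq)⟩

lemma prime_dvd_prod_primes {s : Finset ℕ} (h : ∀ q ∈ s, q.Prime) {q : ℕ} (hq : q.Prime) :
    q ∣ ∏ r ∈ s, r ↔ q ∈ s := by
  constructor
  · intro hd
    obtain ⟨r, hr, hqr⟩ := hq.prime.exists_mem_finset_dvd hd
    rwa [(Nat.prime_dvd_prime_iff_eq hq (h r hr)).1 hqr]
  · intro hqs
    exact Finset.dvd_prod_of_mem _ hqs

lemma fract_nat_div {a p : ℕ} (hp : 0 < p) :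
    Int.fract ((a : ℝ) / p) = ((a % p : ℕ) : ℝ) / p := by
  have hpR : (0:ℝ) < p := by exact_mod_cast hp
  conv_lhs => rw [← Nat.div_add_mod a p]
  have : ((p * (a / p) + a % p : ℕ) : ℝ) / p = ((a % p : ℕ) : ℝ) / p + ((a / p : ℕ) : ℤ) := by
    push_cast
    rw [add_div, add_comm]
    congr 1
    rw [mul_comm, mul_div_assoc, div_self hpR.ne', mul_one]
    norm_cast
  rw [this, Int.fract_add_intCast, Int.fract_eq_self.2 ?_]
  constructor
  · positivity
  · rw [div_lt_one hpR]
    exact_mod_cast Nat.mod_lt a hp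

lemma fract_irrational {s : ℝ} (hs : Irrational s) : Irrational (Int.fract s) :=
  hs.sub_intCast _

lemma ratio_ne_fract {s : ℝ} (hs : Irrational s) (a b : ℕ) :
    (a : ℝ) / b ≠ Int.fract s := by
  intro h
  exact (fract_irrational hs) ⟨(a : ℚ) / b, by push_cast; exact h⟩

lemma sum_mod_bij {p c : ℕ} (hp : p.Prime) (hc : ¬ p ∣ c) (f : ℕ → ℤ) :
    ∑ k ∈ Finset.Icc 1 (p - 1), f ((k * c) % p) = ∑ j ∈ Finset.Icc 1 (p - 1), f j := by
  haveI : Fact p.Prime := ⟨hp⟩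
  have hp0 : 0 < p := hp.pos
  have hcz : (c : ZMod p) ≠ 0 := by
    rw [Ne, ZMod.natCast_eq_zero_iff]
    exact hc
  set c' : ℕ := ((c : ZMod p)⁻¹).val with hc'
  have hc'c : ((c' : ℕ) : ZMod p) = (c : ZMod p)⁻¹ := by
    rw [hc', ZMod.natCast_val, ZMod.cast_id]
  have hc'z : ¬ p ∣ c' := by
    rw [← ZMod.natCast_eq_zero_iff c' p, hc'c]
    exact inv_ne_zero hcz
  have key : ∀ {a b : ℕ}, ¬ p ∣ b → a ∈ Finset.Icc 1 (p-1) → ((a * b) % p) ∈ Finset.Icc 1 (p-1) := by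
    intro a b hb ha
    rw [Finset.mem_Icc] at ha ⊢
    have h1 : (a * b) % p < p := Nat.mod_lt _ hp0
    have h2 : (a * b) % p ≠ 0 := by
      rw [Ne, ← Nat.dvd_iff_mod_eq_zero]
      intro hd
      rcases (Nat.Prime.dvd_mul hp).1 hd with h | h
      · have := Nat.le_of_dvd (by omega) h
        omega
      · exact hb h
    omega
  have comp : ∀ {a b b' : ℕ}, a ∈ Finset.Icc 1 (p-1) → ((b' : ZMod p) = (b : ZMod p)⁻¹) →
      (b : ZMod p) ≠ 0 → ((a * b) % p * b') % p = a := by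
    intro a b b' ha hbb hbz
    rw [Finset.mem_Icc] at ha
    have : (((a * b) % p * b' : ℕ) : ZMod p) = (a : ZMod p) := by
      rw [Nat.cast_mul, ZMod.natCast_mod, hbb, Nat.cast_mul, mul_assoc,
        mul_inv_cancel₀ hbz, mul_one]
    calc ((a * b) % p * b') % p = ((((a * b) % p * b' : ℕ) : ZMod p)).val := by
          rw [ZMod.val_natCast]
      _ = ((a : ZMod p)).val := by rw [this]
      _ = a := by rw [ZMod.val_natCast, Nat.mod_eq_of_lt (by omega)]
  have hcinv : (c : ZMod p) = ((c' : ℕ) : ZMod p)⁻¹ := by rw [hc'c, inv_inv]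
  have hcz' : ((c' : ℕ) : ZMod p) ≠ 0 := by rw [hc'c]; exact inv_ne_zero hcz
  refine Finset.sum_nbij' (fun k => (k * c) % p) (fun j => (j * c') % p)
    (fun a ha => key hc ha) (fun a ha => key hc'z ha) ?_ ?_ ?_
  · intro a ha
    exact comp ha hc'c hcz
  · intro a ha
    exact comp ha hcinv hcz'
  · intro a _
    rfl

lemma sum_reflect {p : ℕ} (f : ℕ → ℤ) :
    ∑ i ∈ Finset.Icc 1 (p - 1), f (p - i) = ∑ j ∈ Finset.Icc 1 (p - 1), f j := by
  refine Finset.sum_nbij' (fun i => p - i) (fun j => p - j) ?_ ?_ ?_ ?_ ?_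
  · intro a ha; simp only [Finset.mem_Icc] at *; omega
  · intro a ha; simp only [Finset.mem_Icc] at *; omega
  · intro a ha; simp only [Finset.mem_Icc] at *; omega
  · intro a ha; simp only [Finset.mem_Icc] at *; omega
  · intro a _; rfl

lemma Np_prime_dvd {x : ℝ} {p : ℕ} (hxirr : Irrational x) {q : ℕ} (hq : q.Prime) :
    q ∣ Np x p ↔ ((q : ℝ) < x ∧ q ≠ p) := by
  unfold Np
  rw [prime_dvd_prod_primes (fun r hr => ((Finset.mem_filter.1 hr).2).1) hq]
  simp only [Finset.mem_filter, Finset.mem_range]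
  constructor
  · rintro ⟨_, _, h2, h3⟩
    exact ⟨h2, h3⟩
  · rintro ⟨h2, h3⟩
    exact ⟨Nat.lt_ceil.2 h2, hq, h2, h3⟩

lemma Np_squarefree (x : ℝ) (p : ℕ) : Squarefree (Np x p) :=
  squarefree_prod_primes (fun r hr => (Finset.mem_filter.1 hr).2.1)

lemma cnt_vanish {x : ℝ} (p a : ℕ) (hx : 0 < x) (hp2 : 2 ≤ p) (ha : x < a) :
    (∑ j ∈ Finset.Icc 1 (p - 1),
      (if (j : ℝ) < p * Int.fract (x / (p * a)) then (1 : ℤ) else 0)) = 0 := by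
  have haR : (0:ℝ) < a := lt_trans hx ha
  have hpR : (0:ℝ) < p := by positivity
  have hs0 : 0 ≤ x / (p * a) := by positivity
  have hs1 : x / (p * a) < 1 := by
    rw [div_lt_one (by positivity)]
    have h2 : (2:ℝ) ≤ p := by exact_mod_cast hp2
    calc x < a := ha
      _ ≤ p * a := by nlinarith
  rw [Finset.sum_eq_zero]
  intro j hj
  rw [Finset.mem_Icc] at hj
  rw [if_neg]
  rw [Int.fract_eq_self.2 ⟨hs0, hs1⟩, not_lt]
  have h1 : (1:ℝ) ≤ j := by exact_mod_cast hj.1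
  have : p * (x / (p * a)) = x / a := by field_simp
  rw [this]
  calc x / a ≤ 1 := le_of_lt (by rw [div_lt_one haR]; exact ha)
    _ ≤ j := h1

lemma fract_eq_sub_natFloor {s : ℝ} (h : 0 ≤ s) : Int.fract s = s - (⌊s⌋₊ : ℝ) := by
  rw [Int.fract]
  congr 1
  exact_mod_cast (congrArg (Int.cast : ℤ → ℝ)
    (Int.toNat_of_nonneg (Int.floor_nonneg.2 h))).symm

/-- The count `#{j ∈ [1,p-1] : j/p < {x/(pb)}}` as an integer sum. -/
def cntF (x : ℝ) (p b : ℕ) : ℤ :=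
  ∑ j ∈ Finset.Icc 1 (p - 1),
    if (j : ℝ) < p * Int.fract (x / ((p : ℝ) * b)) then (1 : ℤ) else 0

lemma cntF_vanish {x : ℝ} (p a : ℕ) (hx : 0 < x) (hp2 : 2 ≤ p) (ha : x < a) :
    cntF x p a = 0 := cnt_vanish p a hx hp2 ha

lemma stepC (x : ℝ) (hx : 0 < x) (hxirr : Irrational x)
    (p : ℕ) (hp : p.Prime) (hpx : (p : ℝ) < x) :
    ∑ b ∈ (Np x p).divisors, ArithmeticFunction.moebius b * cntF x p b
      = ∑ a ∈ (Finset.Icc 1 ⌈x⌉₊).filter (fun a => ¬ p ∣ a),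
          ArithmeticFunction.moebius a * cntF x p a := by
  classical
  have hNsq := Np_squarefree x p
  have hN0 : Np x p ≠ 0 := hNsq.ne_zero
  have hpN : ¬ p ∣ Np x p := fun h => ((Np_prime_dvd hxirr hp).1 h).2 rfl
  set A := (Finset.Icc 1 ⌈x⌉₊).filter (fun a => ¬ p ∣ a) with hA
  set D := (Np x p).divisors with hD
  have hU1 : ∀ b ∈ D ∪ A, b ∉ A → ArithmeticFunction.moebius b * cntF x p b = 0 := by
    intro b hbU hbA
    have hbD : b ∈ D := by
      rcases Finset.mem_union.1 hbU with h | h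
      · exact h
      · exact absurd h hbA
    have hbdvd : b ∣ Np x p := (Nat.mem_divisors.1 hbD).1
    have hb1 : 1 ≤ b := Nat.pos_of_mem_divisors hbD
    have hbp : ¬ p ∣ b := fun h => hpN (h.trans hbdvd)
    have hbig : ⌈x⌉₊ < b := by
      by_contra hle
      exact hbA (Finset.mem_filter.2 ⟨Finset.mem_Icc.2 ⟨hb1, not_lt.1 hle⟩, hbp⟩)
    have hxb : x < b := by
      calc x ≤ ⌈x⌉₊ := Nat.le_ceil x
        _ < b := by exact_mod_cast hbig
    rw [cntF_vanish p b hx hp.two_le hxb, mul_zero]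
  have hU2 : ∀ a ∈ D ∪ A, a ∉ D → ArithmeticFunction.moebius a * cntF x p a = 0 := by
    intro a haU haD
    have haA : a ∈ A := by
      rcases Finset.mem_union.1 haU with h | h
      · exact absurd h haD
      · exact h
    obtain ⟨haI, hap⟩ := Finset.mem_filter.1 haA
    have ha1 : 1 ≤ a := (Finset.mem_Icc.1 haI).1
    by_cases hsf : Squarefree a
    · by_cases hbig : ∃ q ∈ a.primeFactors, x < (q : ℝ)
      · obtain ⟨q, hqm, hxq⟩ := hbig
        have hqa : q ∣ a := Nat.dvd_of_mem_primeFactors hqm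
        have hqle : q ≤ a := Nat.le_of_dvd (by omega) hqa
        have : x < a := lt_of_lt_of_le hxq (by exact_mod_cast hqle)
        rw [cntF_vanish p a hx hp.two_le this, mul_zero]
      · exfalso
        apply haD
        rw [hD, Nat.mem_divisors]
        refine ⟨?_, hN0⟩
        have := Nat.prod_primeFactors_of_squarefree hsf
        rw [← this]
        refine Finset.prod_primes_dvd _ (fun q hq => (Nat.prime_of_mem_primeFactors hq).prime)
          (fun q hq => ?_)
        have hqp : q.Prime := Nat.prime_of_mem_primeFactors hq
        have hqa : q ∣ a := Nat.dvd_of_mem_primeFactors hq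
        have hqx : (q : ℝ) < x := by
          have h1 : ¬ x < (q : ℝ) := fun h => hbig ⟨q, hq, h⟩
          rcases lt_or_eq_of_le (not_lt.1 h1) with h | h
          · exact h
          · exact absurd h.symm (hxirr.ne_int q)
        have hqnep : q ≠ p := fun h => hap (h ▸ hqa)
        exact (Np_prime_dvd hxirr hqp).2 ⟨hqx, hqnep⟩
    · rw [ArithmeticFunction.moebius_eq_zero_of_not_squarefree hsf, zero_mul]
  have e1 : ∑ b ∈ D ∪ A, ArithmeticFunction.moebius b * cntF x p b
      = ∑ b ∈ D, ArithmeticFunction.moebius b * cntF x p b :=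
    (Finset.sum_subset Finset.subset_union_left (fun b h1 h2 => hU2 b h1 h2)).symm
  have e2 : ∑ b ∈ D ∪ A, ArithmeticFunction.moebius b * cntF x p b
      = ∑ b ∈ A, ArithmeticFunction.moebius b * cntF x p b :=
    (Finset.sum_subset Finset.subset_union_right (fun b h1 h2 => hU1 b h1 h2)).symm
  rw [← e1, e2]

set_option maxHeartbeats 1000000 in
lemma stepB (x : ℝ) (hx : 0 < x) (hxirr : Irrational x)
    (p : ℕ) (hp : p.Prime) (hpx : (p : ℝ) < x) :
    ∑ n ∈ Finset.Icc 1 (⌊x / p⌋₊ + 2), ∑ i ∈ Finset.Icc 1 (p - 1),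
        Mp' p (x / ((n : ℝ) * p)) (x / ((n : ℝ) * p - i))
      = ∑ a ∈ (Finset.Icc 1 ⌈x⌉₊).filter (fun a => ¬ p ∣ a),
          ArithmeticFunction.moebius a * cntF x p a := by
  classical
  have hp0 : 0 < p := hp.pos
  have hpR : (0 : ℝ) < p := by exact_mod_cast hp0
  set m := ⌊x / p⌋₊ + 2 with hm
  set A := (Finset.Icc 1 ⌈x⌉₊).filter (fun a => ¬ p ∣ a) with hA
  -- Step 1: rewrite each Mp' as a sum over A
  have hstep1 : ∀ n ∈ Finset.Icc 1 m, ∀ i ∈ Finset.Icc 1 (p - 1),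
      Mp' p (x / ((n : ℝ) * p)) (x / ((n : ℝ) * p - i))
        = ∑ a ∈ A, if ((n : ℝ) * p - i < x / a ∧ x / a < (n : ℝ) * p)
            then ArithmeticFunction.moebius a else 0 := by
    intro n hn i hi
    rw [Finset.mem_Icc] at hn hi
    have hn1 : (1 : ℝ) ≤ n := by exact_mod_cast hn.1
    have hip : (i : ℝ) + 1 ≤ p := by exact_mod_cast (by omega : i + 1 ≤ p)
    have hnp1 : (1 : ℝ) ≤ (n : ℝ) * p - i := by nlinarith
    have hnp0 : (0 : ℝ) < (n : ℝ) * p - i := by linarith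
    have hnpp : (0 : ℝ) < (n : ℝ) * p := by nlinarith
    rw [Mp', ← Finset.sum_filter]
    apply Finset.sum_congr _ (fun _ _ => rfl)
    ext a
    simp only [Finset.mem_filter, Finset.mem_Icc, hA]
    constructor
    · rintro ⟨⟨h1, _⟩, hu, hv, hpd⟩
      have ha0 : (0 : ℝ) < a := by exact_mod_cast h1
      have hax : (a : ℝ) < x := by
        calc (a : ℝ) < x / ((n : ℝ) * p - i) := hv
          _ ≤ x := div_le_self hx.le hnp1
      refine ⟨⟨⟨h1, (Nat.lt_ceil.2 hax).le⟩, hpd⟩, ?_, ?_⟩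
      · rw [lt_div_iff₀ ha0]
        rw [lt_div_iff₀ hnp0] at hv
        linarith [hv]
      · rw [div_lt_iff₀ ha0]
        rw [div_lt_iff₀ hnpp] at hu
        linarith [hu]
    · rintro ⟨⟨⟨h1, _⟩, hpd⟩, hc1, hc2⟩
      have ha0 : (0 : ℝ) < a := by exact_mod_cast h1
      have hv : (a : ℝ) < x / ((n : ℝ) * p - i) := by
        rw [lt_div_iff₀ hnp0]
        rw [lt_div_iff₀ ha0] at hc1
        linarith [hc1]
      have hu : x / ((n : ℝ) * p) < a := by
        rw [div_lt_iff₀ hnpp]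
        rw [div_lt_iff₀ ha0] at hc2
        linarith [hc2]
      exact ⟨⟨h1, (Nat.lt_ceil.2 hv).le⟩, hu, hv, hpd⟩
  rw [Finset.sum_congr rfl (fun n hn => Finset.sum_congr rfl (fun i hi => hstep1 n hn i hi))]
  -- Step 2: swap sums
  have swap1 : ∀ n ∈ Finset.Icc 1 m,
      (∑ i ∈ Finset.Icc 1 (p-1), ∑ a ∈ A, if ((n : ℝ) * p - i < x / a ∧ x / a < (n : ℝ) * p)
          then ArithmeticFunction.moebius a else 0)
      = ∑ a ∈ A, ∑ i ∈ Finset.Icc 1 (p-1), if ((n : ℝ) * p - i < x / a ∧ x / a < (n : ℝ) * p)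
          then ArithmeticFunction.moebius a else 0 := fun n _ => Finset.sum_comm
  rw [Finset.sum_congr rfl swap1, Finset.sum_comm]
  -- Step 3: per a computation
  refine Finset.sum_congr rfl fun a ha => ?_
  rw [hA, Finset.mem_filter, Finset.mem_Icc] at ha
  obtain ⟨⟨ha1, hax⟩, hap⟩ := ha
  have haR : (0 : ℝ) < a := by exact_mod_cast ha1
  set s := x / ((p : ℝ) * a) with hs
  have hpa : ((p * a : ℕ) : ℝ) = (p : ℝ) * a := by push_cast; ring
  have hsirr : Irrational s := by
    rw [hs, ← hpa]
    exact hxirr.div_natCast (by positivity)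
  have hs0 : 0 < s := by rw [hs]; positivity
  have hxa : x / a = p * s := by rw [hs]; field_simp
  have hfr : Int.fract s = s - (⌊s⌋₊ : ℝ) := fract_eq_sub_natFloor hs0.le
  set n₀ := ⌊s⌋₊ + 1 with hn₀def
  have hn₀ : n₀ ∈ Finset.Icc 1 m := by
    rw [Finset.mem_Icc]
    have hsle : s ≤ x / p := by
      rw [hs]
      apply div_le_div_of_nonneg_left hx.le hpR
      have haR1 : (1:ℝ) ≤ a := by exact_mod_cast ha1
      nlinarith
    have := Nat.floor_mono hsle
    omega
  have hchar : ∀ i ∈ Finset.Icc 1 (p-1), ∀ n ∈ Finset.Icc 1 m,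
      (((n : ℝ) * p - i < x / a ∧ x / a < (n : ℝ) * p)
        ↔ (n = n₀ ∧ ((p : ℝ) - i < p * Int.fract s))) := by
    intro i hi n hn
    rw [Finset.mem_Icc] at hi hn
    have hi1 : (i : ℝ) ≤ (p : ℝ) - 1 := by
      have : i + 1 ≤ p := by omega
      have := (by exact_mod_cast this : (i : ℝ) + 1 ≤ p)
      linarith
    have hnR1 : (1 : ℝ) ≤ n := by exact_mod_cast hn.1
    rw [hxa]
    constructor
    · rintro ⟨h1, h2⟩
      have hsn : s < n := by nlinarith
      have hn1s : (n : ℝ) - 1 < s := by nlinarith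
      have hcast : ((n - 1 : ℕ) : ℝ) = (n : ℝ) - 1 := by
        rw [Nat.cast_sub hn.1]; push_cast; ring
      have hfl : ⌊s⌋₊ = n - 1 := by
        rw [Nat.floor_eq_iff hs0.le]
        constructor
        · rw [hcast]; linarith
        · rw [hcast]; linarith
      constructor
      · omega
      · rw [hfr, hfl, hcast]
        nlinarith
    · rintro ⟨rfl, h2⟩
      have hsn : s < ((⌊s⌋₊ + 1 : ℕ) : ℝ) := by
        push_cast
        exact Nat.lt_floor_add_one s
      rw [hfr] at h2
      have hcast : ((⌊s⌋₊ + 1 : ℕ) : ℝ) = (⌊s⌋₊ : ℝ) + 1 := by push_cast; ring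
      constructor
      · rw [hn₀def, hcast]
        nlinarith
      · rw [hn₀def, hcast]
        nlinarith
  have h5 : ∀ n ∈ Finset.Icc 1 m, ∀ i ∈ Finset.Icc 1 (p-1),
      (if ((n : ℝ) * p - i < x / a ∧ x / a < (n : ℝ) * p)
          then ArithmeticFunction.moebius a else 0)
        = ArithmeticFunction.moebius a *
            (if n = n₀ then (if (p : ℝ) - i < p * Int.fract s then (1:ℤ) else 0) else 0) := by
    intro n hn i hi
    rw [if_congr (hchar i hi n hn) rfl rfl, ite_and]
    split_ifs <;> simp
  rw [Finset.sum_congr rfl (fun n hn => Finset.sum_congr rfl (fun i hi => h5 n hn i hi))]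
  have h6 : ∀ n ∈ Finset.Icc 1 m,
      (∑ i ∈ Finset.Icc 1 (p-1), ArithmeticFunction.moebius a *
        (if n = n₀ then (if (p : ℝ) - i < p * Int.fract s then (1:ℤ) else 0) else 0))
      = ArithmeticFunction.moebius a *
          (if n = n₀ then (∑ i ∈ Finset.Icc 1 (p-1),
            (if (p : ℝ) - i < p * Int.fract s then (1:ℤ) else 0)) else 0) := by
    intro n _
    rw [← Finset.mul_sum]
    congr 1
    by_cases hnn : n = n₀
    · simp [hnn]
    · simp [hnn]
  rw [Finset.sum_congr rfl h6, ← Finset.mul_sum]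
  congr 1
  rw [Finset.sum_ite_eq' (Finset.Icc 1 m) n₀
    (fun _ => ∑ i ∈ Finset.Icc 1 (p-1), (if (p : ℝ) - i < p * Int.fract s then (1:ℤ) else 0)),
    if_pos hn₀]
  have h7 : ∀ i ∈ Finset.Icc 1 (p-1),
      (if (p : ℝ) - i < p * Int.fract s then (1:ℤ) else 0)
        = (if (((p - i : ℕ)) : ℝ) < p * Int.fract s then (1:ℤ) else 0) := by
    intro i hi
    rw [Finset.mem_Icc] at hi
    have : ((p - i : ℕ) : ℝ) = (p : ℝ) - i := by
      rw [Nat.cast_sub (by omega)]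
    rw [this]
  rw [Finset.sum_congr rfl h7,
    sum_reflect (fun j => if ((j : ℕ) : ℝ) < p * Int.fract s then (1:ℤ) else 0)]
  simp only [cntF]
  rfl

lemma nat_div_ne_int {a p : ℕ} (hp : 0 < p) (h : ¬ p ∣ a) (z : ℤ) :
    ((a : ℝ) / p) ≠ (z : ℝ) := by
  intro he
  have hpR : (0:ℝ) < p := by exact_mod_cast hp
  rw [div_eq_iff hpR.ne'] at he
  have hz : (a : ℤ) = z * p := by exact_mod_cast he
  exact h (Int.natCast_dvd_natCast.1 ⟨z, by rw [hz]; ring⟩)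

set_option maxHeartbeats 1000000 in
lemma stepA (x : ℝ) (hx : 0 < x) (hxirr : Irrational x)
    (p : ℕ) (hp : p.Prime) (hpx : (p : ℝ) < x) (hxN : x < Np x p) :
    ∑ k ∈ Finset.Icc 1 (p - 1),
        (((Sx x ((k : ℝ) * Np x p - x) ((k : ℝ) * Np x p)).ncard : ℤ)
          - ((Sx x 0 x).ncard : ℤ))
      = - ∑ b ∈ (Np x p).divisors, ArithmeticFunction.moebius b * cntF x p b := by
  classical
  set N := Np x p with hN
  have hp0 : 0 < p := hp.pos
  have hpR : (0:ℝ) < p := by exact_mod_cast hp0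
  have hNsq : Squarefree N := Np_squarefree x p
  have hN0 : 0 < N := Nat.pos_of_ne_zero hNsq.ne_zero
  have hNR : (0:ℝ) < N := lt_trans hx hxN
  have hpN : ¬ p ∣ N := fun h => ((Np_prime_dvd hxirr hp).1 h).2 rfl
  have hcop : Nat.Coprime p N := hp.coprime_iff_not_dvd.2 hpN
  have hPsq : Squarefree (p * N) := (Nat.squarefree_mul hcop).2 ⟨hp.squarefree, hNsq⟩
  have hP0 : 0 < p * N := Nat.mul_pos hp0 hN0
  have hPval : ∀ q : ℕ, q.Prime → (q ∣ p * N ↔ (q : ℝ) < x) := by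
    intro q hq
    rw [hq.dvd_mul, Nat.prime_dvd_prime_iff_eq hq hp, hN, Np_prime_dvd hxirr hq]
    constructor
    · rintro (rfl | ⟨h1, _⟩)
      · exact hpx
      · exact h1
    · intro hqx
      by_cases hqp : q = p
      · exact Or.inl hqp
      · exact Or.inr ⟨hqx, hqp⟩
  have hL2 : ((Sx x 0 x).ncard : ℤ) = ∑ d ∈ (p*N).divisors,
      ArithmeticFunction.moebius d * (Nint (0/(d:ℝ)) (x/(d:ℝ)) : ℤ) :=
    legendre x hxirr (p*N) hP0 hPval 0 x le_rfl
  have hL1 : ∀ k ∈ Finset.Icc 1 (p-1),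
      ((Sx x ((k:ℝ)*N - x) ((k:ℝ)*N)).ncard : ℤ) = ∑ d ∈ (p*N).divisors,
        ArithmeticFunction.moebius d *
          (Nint (((k:ℝ)*N - x)/(d:ℝ)) (((k:ℝ)*N)/(d:ℝ)) : ℤ) := by
    intro k hk
    rw [Finset.mem_Icc] at hk
    have hk1 : (1:ℝ) ≤ k := by exact_mod_cast hk.1
    apply legendre x hxirr (p*N) hP0 hPval
    nlinarith
  have hmain : ∀ k ∈ Finset.Icc 1 (p-1),
      (((Sx x ((k : ℝ) * N - x) ((k : ℝ) * N)).ncard : ℤ) - ((Sx x 0 x).ncard : ℤ))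
        = ∑ d ∈ (p*N).divisors, ArithmeticFunction.moebius d *
            ((Nint (((k:ℝ)*N - x)/(d:ℝ)) (((k:ℝ)*N)/(d:ℝ)) : ℤ)
              - (Nint (0/(d:ℝ)) (x/(d:ℝ)) : ℤ)) := by
    intro k hk
    rw [hL1 k hk, hL2, ← Finset.sum_sub_distrib]
    exact Finset.sum_congr rfl fun d _ => (mul_sub _ _ _).symm
  rw [Finset.sum_congr rfl hmain]
  -- split into p ∤ d and p ∣ d parts
  have hsplit : ∀ (g : ℕ → ℤ), ∑ d ∈ (p*N).divisors, g d
      = ∑ d ∈ N.divisors, g d + ∑ b ∈ N.divisors, g (p*b) := by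
    intro g
    have e1 : (p*N).divisors.filter (fun d => ¬ p ∣ d) = N.divisors := by
      ext d
      simp only [Finset.mem_filter, Nat.mem_divisors]
      constructor
      · rintro ⟨⟨hd, _⟩, hpd⟩
        exact ⟨(Nat.Coprime.dvd_of_dvd_mul_left
          ((hp.coprime_iff_not_dvd.2 hpd).symm) hd), hN0.ne'⟩
      · rintro ⟨hd, _⟩
        exact ⟨⟨hd.mul_left p, hP0.ne'⟩, fun hpd => hpN (hpd.trans hd)⟩
    have e2 : ∑ d ∈ (p*N).divisors.filter (fun d => p ∣ d), g d
        = ∑ b ∈ N.divisors, g (p*b) := by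
      refine Finset.sum_nbij' (fun d => d / p) (fun b => p * b) ?_ ?_ ?_ ?_ ?_
      · intro d hd
        have h1 := Finset.mem_filter.1 hd
        obtain ⟨e, rfl⟩ := h1.2
        show p * e / p ∈ N.divisors
        rw [Nat.mul_div_cancel_left e hp0, Nat.mem_divisors]
        refine ⟨?_, hN0.ne'⟩
        exact (Nat.mul_dvd_mul_iff_left hp0).1 (Nat.mem_divisors.1 h1.1).1
      · intro b hb
        refine Finset.mem_filter.2 ⟨Nat.mem_divisors.2
          ⟨Nat.mul_dvd_mul_left p (Nat.mem_divisors.1 hb).1, hP0.ne'⟩, dvd_mul_right p b⟩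
      · intro d hd
        exact Nat.mul_div_cancel' (Finset.mem_filter.1 hd).2
      · intro b _
        exact Nat.mul_div_cancel_left b hp0
      · intro d hd
        rw [Nat.mul_div_cancel' (Finset.mem_filter.1 hd).2]
    rw [← Finset.sum_filter_add_sum_filter_not ((p*N).divisors) (fun d => p ∣ d) g, e2, e1,
      add_comm]
  have hsplit' : ∀ k ∈ Finset.Icc 1 (p-1),
      ∑ d ∈ (p*N).divisors, ArithmeticFunction.moebius d *
          ((Nint (((k:ℝ)*N - x)/(d:ℝ)) (((k:ℝ)*N)/(d:ℝ)) : ℤ)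
            - (Nint (0/(d:ℝ)) (x/(d:ℝ)) : ℤ))
        = (∑ d ∈ N.divisors, ArithmeticFunction.moebius d *
            ((Nint (((k:ℝ)*N - x)/(d:ℝ)) (((k:ℝ)*N)/(d:ℝ)) : ℤ)
              - (Nint (0/(d:ℝ)) (x/(d:ℝ)) : ℤ)))
          + ∑ b ∈ N.divisors, ArithmeticFunction.moebius (p*b) *
              ((Nint (((k:ℝ)*N - x)/((p*b : ℕ):ℝ)) (((k:ℝ)*N)/((p*b : ℕ):ℝ)) : ℤ)
                - (Nint (0/((p*b : ℕ):ℝ)) (x/((p*b : ℕ):ℝ)) : ℤ)) :=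
    fun k _ => hsplit _
  rw [Finset.sum_congr rfl hsplit']
  -- the p ∤ d part vanishes
  have hzero : ∀ k ∈ Finset.Icc 1 (p-1), ∀ d ∈ N.divisors,
      ArithmeticFunction.moebius d *
        ((Nint (((k:ℝ)*N - x)/(d:ℝ)) (((k:ℝ)*N)/(d:ℝ)) : ℤ)
          - (Nint (0/(d:ℝ)) (x/(d:ℝ)) : ℤ)) = 0 := by
    intro k hk d hd
    have hd0 : 0 < d := Nat.pos_of_mem_divisors hd
    have hdR : (0:ℝ) < d := by exact_mod_cast hd0
    obtain ⟨e, he⟩ := (Nat.mem_divisors.1 hd).1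
    have hirr : Irrational (x / d) := hxirr.div_natCast hd0.ne'
    have h1 : ((k:ℝ)*N)/(d:ℝ) = (((k*e : ℕ):ℤ):ℝ) := by
      rw [he]
      push_cast
      field_simp
    have h2 : ((k:ℝ)*N - x)/(d:ℝ) = (((k*e:ℕ):ℤ):ℝ) - x/d := by rw [sub_div, h1]
    rw [h1, h2, Nint_int_sub _ hirr, zero_div, sub_self, mul_zero]
  -- compute the p ∣ d part
  have hbr2 : ∀ k ∈ Finset.Icc 1 (p-1), ∀ b ∈ N.divisors,
      ArithmeticFunction.moebius (p*b) *
        ((Nint (((k:ℝ)*N - x)/((p*b : ℕ):ℝ)) (((k:ℝ)*N)/((p*b : ℕ):ℝ)) : ℤ)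
          - (Nint (0/((p*b : ℕ):ℝ)) (x/((p*b : ℕ):ℝ)) : ℤ))
      = (-(ArithmeticFunction.moebius b)) *
          (if (((k * (N / b)) % p : ℕ) : ℝ) < p * Int.fract (x / ((p:ℝ)*b)) then 1 else 0) := by
    intro k hk b hb
    rw [Finset.mem_Icc] at hk
    have hbdvd : b ∣ N := (Nat.mem_divisors.1 hb).1
    have hb0 : 0 < b := Nat.pos_of_mem_divisors hb
    have hbR : (0:ℝ) < b := by exact_mod_cast hb0
    obtain ⟨c, hc⟩ := hbdvd
    have hcN : c ∣ N := ⟨b, by rw [hc]; ring⟩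
    have hNb : N / b = c := by rw [hc, Nat.mul_div_cancel_left c hb0]
    have hpk : ¬ p ∣ k := by
      intro hdv
      have := Nat.le_of_dvd (by omega) hdv
      omega
    have hpc : ¬ p ∣ c := fun h => hpN (h.trans hcN)
    have hpkc : ¬ p ∣ k * c := by
      rw [hp.dvd_mul]
      tauto
    have hpbR : ((p*b : ℕ):ℝ) = (p:ℝ)*b := by push_cast; ring
    have hsirr : Irrational (x / ((p:ℝ)*b)) := by
      rw [← hpbR]
      exact hxirr.div_natCast (by positivity)
    have hs0 : 0 < x / ((p:ℝ)*b) := by positivity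
    have ht_ne : ∀ z : ℤ, ((k*c : ℕ):ℝ)/(p:ℝ) ≠ (z:ℝ) := fun z => nat_div_ne_int hp0 hpkc z
    have hfrt : Int.fract (((k*c : ℕ):ℝ)/(p:ℝ)) = (((k*c) % p : ℕ):ℝ)/(p:ℝ) :=
      fract_nat_div hp0
    have hne : Int.fract (((k*c : ℕ):ℝ)/(p:ℝ)) ≠ Int.fract (x / ((p:ℝ)*b)) := by
      rw [hfrt]
      exact ratio_ne_fract hsirr _ p
    have e1 : ((k:ℝ)*N)/((p*b : ℕ):ℝ) = ((k*c : ℕ):ℝ)/(p:ℝ) := by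
      rw [hpbR, hc]
      push_cast
      field_simp
    have e2 : ((k:ℝ)*N - x)/((p*b : ℕ):ℝ) = ((k*c : ℕ):ℝ)/(p:ℝ) - x/((p:ℝ)*b) := by
      rw [sub_div, e1, hpbR]
    have hcopb : Nat.Coprime p b := hp.coprime_iff_not_dvd.2 (fun h => hpN (h.trans (Nat.mem_divisors.1 hb).1))
    have hmu : ArithmeticFunction.moebius (p*b) = -(ArithmeticFunction.moebius b) := by
      rw [ArithmeticFunction.isMultiplicative_moebius.map_mul_of_coprime hcopb,
        ArithmeticFunction.moebius_apply_prime hp, neg_one_mul]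
    rw [e1, e2, hpbR, zero_div, Nint_diff ht_ne hsirr hs0 hne, hmu, hNb]
    congr 1
    rw [hfrt]
    exact if_congr (by rw [div_lt_iff₀ hpR, mul_comm (Int.fract (x / ((p:ℝ)*b))) ((p:ℝ))]) rfl rfl
  have hstep2' : ∀ k ∈ Finset.Icc 1 (p-1),
      ((∑ d ∈ N.divisors, ArithmeticFunction.moebius d *
          ((Nint (((k:ℝ)*N - x)/(d:ℝ)) (((k:ℝ)*N)/(d:ℝ)) : ℤ)
            - (Nint (0/(d:ℝ)) (x/(d:ℝ)) : ℤ)))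
        + ∑ b ∈ N.divisors, ArithmeticFunction.moebius (p*b) *
            ((Nint (((k:ℝ)*N - x)/((p*b : ℕ):ℝ)) (((k:ℝ)*N)/((p*b : ℕ):ℝ)) : ℤ)
              - (Nint (0/((p*b : ℕ):ℝ)) (x/((p*b : ℕ):ℝ)) : ℤ)))
      = ∑ b ∈ N.divisors, (-(ArithmeticFunction.moebius b)) *
          (if (((k * (N / b)) % p : ℕ) : ℝ) < p * Int.fract (x / ((p:ℝ)*b)) then (1:ℤ) else 0) := by
    intro k hk
    rw [Finset.sum_eq_zero (hzero k hk), zero_add]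
    exact Finset.sum_congr rfl (fun b hb => hbr2 k hk b hb)
  rw [Finset.sum_congr rfl hstep2']
  rw [Finset.sum_comm]
  have hfin : ∀ b ∈ N.divisors,
      ∑ k ∈ Finset.Icc 1 (p-1), (-(ArithmeticFunction.moebius b)) *
        (if (((k * (N / b)) % p : ℕ) : ℝ) < p * Int.fract (x / ((p:ℝ)*b)) then (1:ℤ) else 0)
      = -(ArithmeticFunction.moebius b * cntF x p b) := by
    intro b hb
    rw [← Finset.mul_sum]
    have hbdvd : b ∣ N := (Nat.mem_divisors.1 hb).1
    have hpc : ¬ p ∣ N / b := fun h => hpN (h.trans (Nat.div_dvd_of_dvd hbdvd))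
    rw [sum_mod_bij hp hpc
      (fun j => if ((j : ℕ) : ℝ) < p * Int.fract (x / ((p:ℝ)*b)) then (1:ℤ) else 0)]
    rw [neg_mul]
    rfl
  rw [Finset.sum_congr rfl hfin, Finset.sum_neg_distrib]

end StmtAux

theorem stmt_1 (x : ℝ) (hx : 0 < x) (hxirr : Irrational x)
    (p : ℕ) (hp : p.Prime) (hpx : (p : ℝ) < x) (hxN : x < Np x p) :
    ∑ k ∈ Finset.Icc 1 (p - 1),
        (((Sx x ((k : ℝ) * Np x p - x) ((k : ℝ) * Np x p)).ncard : ℤ)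
          - ((Sx x 0 x).ncard : ℤ))
      = - ∑ n ∈ Finset.Icc 1 (⌊x / p⌋₊ + 2), ∑ i ∈ Finset.Icc 1 (p - 1),
          Mp' p (x / ((n : ℝ) * p)) (x / ((n : ℝ) * p - i)) := by
  have h1 := StmtAux.stepA x hx hxirr p hp hpx hxN
  have h2 := StmtAux.stepC x hx hxirr p hp hpx
  have h3 := StmtAux.stepB x hx hxirr p hp hpx
  rw [h1, h2, ← h3]

end
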